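/- For every integer n, the rational number u = (1 - n^2)/(2n^2 + 1) satisfies -1/2 < u ≤ 1, and if n ≠ 0 then u < 0.164; in particular for n ≠ 0 the quantity Δ = (-36u^3 - 54u + 9)/(2u + 1)^3 equals 12n^6 - 3 and is positive. -/

import Mathlib

/-- For every integer `n`, the rational number `u = (1-n²)/(2n²+1)` satisfies
`-1/2 < u ≤ 1`, and if `n ≠ 0` then `u < 0.164`; in particular for `n ≠ 0` the
discriminant `Δ = (-36u³ - 54u + 9)/(2u+1)³` equals `12n⁶ - 3` and is positive. -/
theorem conic_parameter_bounds (n : ℤ) (u : ℚ)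
    (hu : u = (1 - (n : ℚ) ^ 2) / (2 * (n : ℚ) ^ 2 + 1)) :
    -1/2 < u ∧ u ≤ 1 ∧
    (n ≠ 0 → u < 164/1000 ∧
      (-36 * u ^ 3 - 54 * u + 9) / (2 * u + 1) ^ 3 = 12 * (n : ℚ) ^ 6 - 3 ∧
      0 < (-36 * u ^ 3 - 54 * u + 9) / (2 * u + 1) ^ 3) := by
  set x : ℚ := (n : ℚ) ^ 2 with hx
  have hx0 : 0 ≤ x := sq_nonneg _
  have hd : (0:ℚ) < 2 * x + 1 := by linarith
  have h1 : -1/2 < u := by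
    rw [hu, lt_div_iff₀ hd]; ring_nf; linarith
  have h2 : u ≤ 1 := by
    rw [hu, div_le_one hd]; linarith
  refine ⟨h1, h2, fun hn => ?_⟩
  have hx1 : 1 ≤ x := by
    have h : (1:ℤ) ≤ n ^ 2 := by rcases lt_or_gt_of_ne hn with h | h <;> nlinarith
    rw [hx]; exact_mod_cast h
  have h3 : u < 164/1000 := by
    rw [hu, div_lt_iff₀ hd]; nlinarith
  have hne : (2 * u + 1) ≠ 0 := by
    have : u = (1 - x) / (2 * x + 1) := hu
    exact ne_of_gt (by linarith)
  have heq : (-36 * u ^ 3 - 54 * u + 9) / (2 * u + 1) ^ 3 = 12 * (n : ℚ) ^ 6 - 3 := by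
    have h6 : ((n:ℚ)) ^ 6 = x ^ 3 := by rw [hx]; ring
    rw [div_eq_iff (pow_ne_zero 3 hne), hu, h6]
    have hd' : (2 * x + 1) ≠ 0 := hd.ne'
    field_simp
    ring
  refine ⟨h3, heq, ?_⟩
  rw [heq]
  have h6' : ((n:ℚ)) ^ 6 = x ^ 3 := by rw [hx]; ring
  nlinarith [pow_le_pow_left₀ zero_le_one hx1 3, h6']
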